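/- Let T be a finite abelian group, let H = ℤ × T, let α, β, γ ∈ H with γ = m·α + n·β for some integers m, n, and let G be an abelian group such that there exists an injective group homomorphism from H ⧸ ⟨γ⟩ into G. Then gcd( card (H ⧸ ⟨α⟩), card (H ⧸ ⟨β⟩) ) divides card G. -/

import Mathlib

open AddSubgroup

private lemma card_quot_zmultiples (T : Type*) [AddCommGroup T] [Finite T] (x : ℤ × T) :
    Nat.card ((ℤ × T) ⧸ AddSubgroup.zmultiples x) = x.1.natAbs * Nat.card T := by
  obtain ⟨a, t⟩ := x
  rcases eq_or_ne a 0 with rfl | ha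
  · -- quotient surjects onto ℤ, hence infinite, card 0
    have hker : ∀ y ∈ zmultiples ((0, t) : ℤ × T), (AddMonoidHom.fst ℤ T) y = 0 := by
      rintro y ⟨k, rfl⟩
      simp
    let g := QuotientAddGroup.lift _ (AddMonoidHom.fst ℤ T) hker
    have hsurj : Function.Surjective g := fun z => ⟨QuotientAddGroup.mk (z, 0), rfl⟩
    have : Infinite ((ℤ × T) ⧸ zmultiples ((0, t) : ℤ × T)) := Infinite.of_surjective g hsurj
    simp [Nat.card_eq_zero_of_infinite]
  · -- a ≠ 0
    set P : AddSubgroup (ℤ × T) := (zmultiples a).prod ⊤ with hP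
    have hle : zmultiples ((a, t) : ℤ × T) ≤ P := by
      rintro y ⟨k, rfl⟩
      exact ⟨⟨k, rfl⟩, trivial⟩
    have hrel := AddSubgroup.relIndex_mul_index hle
    have hPidx : P.index = a.natAbs := by
      rw [hP, AddSubgroup.index_prod, AddSubgroup.index_top, Int.index_zmultiples, mul_one]
    have hdvd : ∀ p : P, a ∣ (p : ℤ × T).1 := by
      intro p
      obtain ⟨k, hk⟩ := (AddSubgroup.mem_prod.mp p.2).1
      have hk' : k • a = (p : ℤ × T).1 := hk
      exact ⟨k, by rw [← hk', zsmul_eq_mul, Int.cast_id, mul_comm]⟩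
    -- define ψ : P →+ T, ψ p = p.2 - (p.1 / a) • t
    let ψ : P →+ T := AddMonoidHom.mk'
      (fun p => (p : ℤ × T).2 - ((p : ℤ × T).1 / a) • t)
      (by
        intro p q
        show ((p : ℤ × T).2 + (q : ℤ × T).2)
            - (((p : ℤ × T).1 + (q : ℤ × T).1) / a) • t = _
        rw [Int.add_ediv_of_dvd_left (hdvd p), add_smul]
        abel)
    have hψsurj : Function.Surjective ψ := by
      intro s
      refine ⟨⟨(0, s), ⟨zero_mem _, trivial⟩⟩, ?_⟩
      show s - ((0 : ℤ) / a) • t = s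
      simp
    have hkerψ : ψ.ker = (zmultiples ((a, t) : ℤ × T)).addSubgroupOf P := by
      ext p
      have hx : (p : ℤ × T).1 / a * a = (p : ℤ × T).1 := Int.ediv_mul_cancel (hdvd p)
      constructor
      · intro h
        have hs : (p : ℤ × T).2 = ((p : ℤ × T).1 / a) • t := by
          have h0 : (p : ℤ × T).2 - ((p : ℤ × T).1 / a) • t = 0 := h
          linear_combination (norm := abel) h0
        refine ⟨(p : ℤ × T).1 / a, ?_⟩
        show (((p : ℤ × T).1 / a) • a, ((p : ℤ × T).1 / a) • t) = (p : ℤ × T)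
        rw [← hs]
        exact Prod.ext (by rw [zsmul_eq_mul]; exact hx) rfl
      · rintro ⟨k, hk⟩
        have h1 : k • a = (p : ℤ × T).1 := congrArg Prod.fst hk
        have h2 : k • t = (p : ℤ × T).2 := congrArg Prod.snd hk
        have hka : (p : ℤ × T).1 / a = k := by
          rw [← h1, zsmul_eq_mul, Int.mul_ediv_cancel _ ha, Int.cast_id]
        show (p : ℤ × T).2 - ((p : ℤ × T).1 / a) • t = 0
        rw [hka, h2, sub_self]
    have hrelcard : (zmultiples ((a, t) : ℤ × T)).relIndex P = Nat.card T := by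
      have e := QuotientAddGroup.quotientKerEquivOfSurjective ψ hψsurj
      have hc : Nat.card (P ⧸ ψ.ker) = Nat.card T := Nat.card_congr e.toEquiv
      rw [hkerψ] at hc
      exact hc
    have hq : Nat.card ((ℤ × T) ⧸ zmultiples ((a, t) : ℤ × T))
        = (zmultiples ((a, t) : ℤ × T)).index := rfl
    rw [hq, ← hrel, hrelcard, hPidx, mul_comm]

/-- The algebraic core of Theorem 2: for `H = ℤ × T` with `T` a finite abelian group,
`α, β ∈ H`, `γ = m•α + n•β`, and an abelian group `G` admitting an injective
homomorphism `H ⧸ ⟨γ⟩ → G`, the gcd `gcd(card (H ⧸ ⟨α⟩), card (H ⧸ ⟨β⟩))`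
divides `card G`. -/
theorem gcd_card_quot_dvd_card_of_injective (T : Type*) [AddCommGroup T] [Finite T]
    (α β γ : ℤ × T) (m n : ℤ) (hγ : γ = m • α + n • β)
    (G : Type*) [AddCommGroup G]
    (f : ((ℤ × T) ⧸ AddSubgroup.zmultiples γ) →+ G) (hf : Function.Injective f) :
    Nat.gcd (Nat.card ((ℤ × T) ⧸ AddSubgroup.zmultiples α))
        (Nat.card ((ℤ × T) ⧸ AddSubgroup.zmultiples β))
      ∣ Nat.card G := by
  rw [card_quot_zmultiples T α, card_quot_zmultiples T β, Nat.gcd_mul_right]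
  have hc : γ.1 = m * α.1 + n * β.1 := by
    rw [hγ]; simp [zsmul_eq_mul]
  have hgcd_dvd : Nat.gcd α.1.natAbs β.1.natAbs ∣ γ.1.natAbs := by
    have h1 : ((Nat.gcd α.1.natAbs β.1.natAbs : ℤ)) ∣ γ.1 := by
      rw [hc]
      exact dvd_add (Dvd.dvd.mul_left (Int.gcd_dvd_left α.1 β.1) m) (Dvd.dvd.mul_left (Int.gcd_dvd_right α.1 β.1) n)
    simpa using Int.natAbs_dvd_natAbs.mpr h1
  have hquot_dvd : Nat.card ((ℤ × T) ⧸ AddSubgroup.zmultiples γ) ∣ Nat.card G := by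
    have h : Nat.card ((ℤ × T) ⧸ AddSubgroup.zmultiples γ) = Nat.card f.range :=
      Nat.card_congr (AddMonoidHom.ofInjective hf).toEquiv
    rw [h]
    exact AddSubgroup.card_addSubgroup_dvd_card f.range
  calc Nat.gcd α.1.natAbs β.1.natAbs * Nat.card T
      ∣ γ.1.natAbs * Nat.card T := Nat.mul_dvd_mul_right hgcd_dvd _
    _ = Nat.card ((ℤ × T) ⧸ AddSubgroup.zmultiples γ) := (card_quot_zmultiples T γ).symm
    _ ∣ Nat.card G := hquot_dvd
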